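/- Let M' be the submonoid of ℤ³ generated by (0,0,1) together with all (x,1,0) for x ∈ ℤ, and let M = M' ∪ {(x,y,z) ∈ ℤ³ : y ≥ 2}. Then M is a reduced submonoid of ℤ³ whose set of atoms is exactly {(0,0,1)} ∪ {(n,1,0) : n ∈ ℤ}, and M is not atomic: the element (0,2,−1) ∈ M is not a sum of atoms. -/

import Mathlib

private lemma smul001 (n : ℕ) : n • ((0 : ℤ), (0 : ℤ), (1 : ℤ)) = (0, 0, (n : ℤ)) := by
  induction n with
  | zero => simp [Prod.ext_iff]
  | succ k ih => simp [succ_nsmul, ih, Prod.ext_iff]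

private lemma smul010 (n : ℕ) : n • ((0 : ℤ), (1 : ℤ), (0 : ℤ)) = (0, (n : ℤ), 0) := by
  induction n with
  | zero => simp [Prod.ext_iff]
  | succ k ih => simp [succ_nsmul, ih, Prod.ext_iff]

private lemma clos_mem (p : ℤ × ℤ × ℤ) :
    p ∈ AddSubmonoid.closure ({(0, 0, 1)} ∪ {p : ℤ × ℤ × ℤ | p.2.1 = 1 ∧ p.2.2 = 0}) ↔
      0 ≤ p.2.1 ∧ 0 ≤ p.2.2 ∧ (p.2.1 = 0 → p.1 = 0) := by
  constructor
  · intro hp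
    induction hp using AddSubmonoid.closure_induction with
    | mem x hx =>
      rcases hx with hx | hx
      · simp_all [Prod.ext_iff]
      · obtain ⟨h1, h2⟩ := hx
        refine ⟨by omega, by omega, by omega⟩
    | zero => simp
    | add x y hx hy px py =>
      obtain ⟨a1, a2, a3⟩ := px
      obtain ⟨b1, b2, b3⟩ := py
      refine ⟨by simp; omega, by simp; omega, ?_⟩
      intro h
      simp only [Prod.fst_add, Prod.snd_add] at h ⊢
      have : x.2.1 = 0 ∧ y.2.1 = 0 := by omega
      rw [a3 this.1, b3 this.2]; ring
  · rintro ⟨h1, h2, h3⟩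
    set S : Set (ℤ × ℤ × ℤ) := {(0, 0, 1)} ∪ {p : ℤ × ℤ × ℤ | p.2.1 = 1 ∧ p.2.2 = 0} with hS
    have hg1 : ((0:ℤ), (0:ℤ), (1:ℤ)) ∈ AddSubmonoid.closure S :=
      AddSubmonoid.subset_closure (by left; rfl)
    have hg2 : ∀ x : ℤ, ((x, (1:ℤ), (0:ℤ)) : ℤ × ℤ × ℤ) ∈ AddSubmonoid.closure S :=
      fun x => AddSubmonoid.subset_closure (by right; exact ⟨rfl, rfl⟩)
    obtain ⟨x, y, z⟩ := p
    simp only at h1 h2 h3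
    rcases eq_or_lt_of_le h1 with hy0 | hy1
    · have hx : x = 0 := h3 hy0.symm
      have heq : ((x, y, z) : ℤ × ℤ × ℤ) = z.toNat • ((0:ℤ), (0:ℤ), (1:ℤ)) := by
        rw [smul001]; simp [Prod.ext_iff, hx, ← hy0]; omega
      rw [heq]
      exact nsmul_mem hg1 _
    · have heq : ((x, y, z) : ℤ × ℤ × ℤ) =
          ((x, 1, 0) : ℤ × ℤ × ℤ) + (y - 1).toNat • ((0:ℤ), (1:ℤ), (0:ℤ))
            + z.toNat • ((0:ℤ), (0:ℤ), (1:ℤ)) := by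
        rw [smul001, smul010]; simp [Prod.ext_iff]; omega
      rw [heq]
      have hg3 : ((0:ℤ), (1:ℤ), (0:ℤ)) ∈ AddSubmonoid.closure S := hg2 0
      exact add_mem (add_mem (hg2 x) (nsmul_mem hg3 _)) (nsmul_mem hg1 _)



/-- An element of ℤ³ invertible within the submonoid M. -/
def IsUnitIn3 (M : AddSubmonoid (ℤ × ℤ × ℤ)) (x : ℤ × ℤ × ℤ) : Prop :=
  x ∈ M ∧ -x ∈ M

/-- An atom of the submonoid M of ℤ³. -/
def IsAtomIn3 (M : AddSubmonoid (ℤ × ℤ × ℤ)) (a : ℤ × ℤ × ℤ) : Prop :=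
  a ∈ M ∧ ¬ IsUnitIn3 M a ∧
    ∀ r s : ℤ × ℤ × ℤ, r ∈ M → s ∈ M → a = r + s → IsUnitIn3 M r ∨ IsUnitIn3 M s

/-- Let M' be the submonoid of ℤ³ generated by (0,0,1) and all (x,1,0), and
M = M' ∪ {(x,y,z) : y ≥ 2}.  Then M is reduced, its atoms are exactly
(0,0,1) and the (n,1,0), and M is not atomic: (0,2,-1) is not a sum of atoms. -/
theorem M10_reduced_atoms_not_atomic (M : AddSubmonoid (ℤ × ℤ × ℤ))
    (hM : (M : Set (ℤ × ℤ × ℤ)) =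
      (AddSubmonoid.closure ({(0, 0, 1)} ∪ {p : ℤ × ℤ × ℤ | p.2.1 = 1 ∧ p.2.2 = 0}) :
        Set (ℤ × ℤ × ℤ)) ∪ {p : ℤ × ℤ × ℤ | 2 ≤ p.2.1}) :
    (∀ x ∈ M, IsUnitIn3 M x → x = 0) ∧
    ({a : ℤ × ℤ × ℤ | IsAtomIn3 M a}
        = {(0, 0, 1)} ∪ {p : ℤ × ℤ × ℤ | p.2.1 = 1 ∧ p.2.2 = 0}) ∧
    ((0, 2, -1) ∈ M ∧
      (0, 2, -1) ∉ AddSubmonoid.closure {a : ℤ × ℤ × ℤ | IsAtomIn3 M a}) := by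
  have hmem : ∀ p : ℤ × ℤ × ℤ, p ∈ M ↔
      ((p.1 = 0 ∧ p.2.1 = 0 ∧ 0 ≤ p.2.2) ∨ (p.2.1 = 1 ∧ 0 ≤ p.2.2) ∨ 2 ≤ p.2.1) := by
    intro p
    rw [show (p ∈ M ↔ p ∈ (M : Set (ℤ × ℤ × ℤ))) from Iff.rfl, hM]
    simp only [Set.mem_union, SetLike.mem_coe, clos_mem, Set.mem_setOf_eq]
    omega
  have hunit : ∀ x : ℤ × ℤ × ℤ, IsUnitIn3 M x → x = 0 := by
    rintro ⟨a, b, c⟩ ⟨hx, hnx⟩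
    rw [hmem] at hx hnx
    simp only [Prod.neg_mk] at hnx
    dsimp only at hx hnx
    have : a = 0 ∧ b = 0 ∧ c = 0 := by omega
    simp [Prod.ext_iff, this.1, this.2.1, this.2.2]
  have hunit0 : IsUnitIn3 M 0 := ⟨zero_mem M, by simpa using zero_mem M⟩
  have hatoms : {a : ℤ × ℤ × ℤ | IsAtomIn3 M a}
      = {(0, 0, 1)} ∪ {p : ℤ × ℤ × ℤ | p.2.1 = 1 ∧ p.2.2 = 0} := by
    ext a
    simp only [Set.mem_setOf_eq, Set.mem_union, Set.mem_singleton_iff]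
    constructor
    · rintro ⟨haM, hnu, hdec⟩
      obtain ⟨x, y, z⟩ := a
      rw [hmem] at haM
      simp only at haM
      have hne : ¬((x, y, z) : ℤ × ℤ × ℤ) = 0 := fun h => hnu (h ▸ hunit0)
      rcases haM with ⟨hx, hy, hz⟩ | ⟨hy, hz⟩ | hy
      · subst hx hy
        have hz1 : 1 ≤ z := by
          rcases eq_or_lt_of_le hz with h | h
          · exact (hne (by simp [Prod.ext_iff]; omega)).elim
          · omega
        by_cases hz2 : z = 1
        · left; simp [hz2]
        · exfalso
          have hd := hdec (0, 0, 1) (0, 0, z - 1)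
            ((hmem _).mpr (by simp)) ((hmem _).mpr (by simp; omega))
            (by simp [Prod.ext_iff] <;> omega)
          rcases hd with h | h
          · have := hunit _ h; simp [Prod.ext_iff] at this
          · have := hunit _ h; simp [Prod.ext_iff] at this; omega
      · subst hy
        right
        refine ⟨rfl, ?_⟩
        by_contra hz0
        have hz1 : 1 ≤ z := lt_of_le_of_ne hz (Ne.symm hz0)
        have hd := hdec (x, 1, 0) (0, 0, z)
          ((hmem _).mpr (by simp)) ((hmem _).mpr (by simp; omega))
          (by simp [Prod.ext_iff])
        rcases hd with h | h
        · have := hunit _ h; simp [Prod.ext_iff] at this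
        · have := hunit _ h; simp [Prod.ext_iff] at this; omega
      · exfalso
        have hd := hdec (x, y, z - 1) (0, 0, 1)
          ((hmem _).mpr (by simp; omega)) ((hmem _).mpr (by simp))
          (by simp [Prod.ext_iff])
        rcases hd with h | h
        · have := hunit _ h; simp [Prod.ext_iff] at this; omega
        · have := hunit _ h; simp [Prod.ext_iff] at this
    · intro ha
      have haM : a ∈ M := by
        rcases ha with rfl | ⟨h1, h2⟩
        · exact (hmem _).mpr (by simp)
        · exact (hmem _).mpr (by right; left; exact ⟨h1, by omega⟩)
      have hanu : ¬ IsUnitIn3 M a := by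
        intro hu
        have := hunit _ hu
        rcases ha with rfl | ⟨h1, h2⟩
        · simp [Prod.ext_iff] at this
        · rw [this] at h1; simp at h1
      refine ⟨haM, hanu, ?_⟩
      rintro ⟨r1, r2, r3⟩ ⟨s1, s2, s3⟩ hr hs heq
      rw [hmem] at hr hs
      simp only at hr hs
      obtain ⟨a1, a2, a3⟩ := a
      simp only [Prod.mk_add_mk, Prod.mk.injEq] at heq
      have hva : (a2 = 0 ∧ a3 = 1) ∨ (a2 = 1 ∧ a3 = 0) := by
        rcases ha with h | h
        · simp [Prod.ext_iff] at h; tauto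
        · simp only at h; tauto
      have h0 : (r1 = 0 ∧ r2 = 0 ∧ r3 = 0) ∨ (s1 = 0 ∧ s2 = 0 ∧ s3 = 0) := by omega
      rcases h0 with ⟨e1, e2, e3⟩ | ⟨e1, e2, e3⟩
      · left; subst e1; subst e2; subst e3; exact hunit0
      · right; subst e1; subst e2; subst e3; exact hunit0
  refine ⟨fun x _ hx => hunit x hx, hatoms, (hmem _).mpr (by simp), ?_⟩
  rw [hatoms]
  intro hcon
  have key : ∀ q : ℤ × ℤ × ℤ,
      q ∈ AddSubmonoid.closure ({(0, 0, 1)} ∪ {p : ℤ × ℤ × ℤ | p.2.1 = 1 ∧ p.2.2 = 0}) →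
      (0 : ℤ) ≤ q.2.2 := by
    intro q hq
    induction hq using AddSubmonoid.closure_induction with
    | mem x hx =>
      rcases hx with h | h
      · simp only [Set.mem_singleton_iff] at h; simp [h]
      · exact h.2.ge
    | zero => simp
    | add x y _ _ hx hy => simp only [Prod.snd_add]; omega
  have := key _ hcon
  norm_num at this
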